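/- Let Q, N, K, T be positive integers with K dividing Q, and let Ω be a finite probability space carrying mutually independent random variables V_{q,n}, for q ∈ {1,…,Q} and n ∈ {1,…,N}, each uniformly distributed on a set of size 2^T. Let M_1, …, M_K ⊆ {1,…,N} (file assignment) and let W_1, …, W_K ⊆ {1,…,Q} be pairwise disjoint sets each of size Q/K (reduce assignment). Let X_1, …, X_K be random variables such that X_k = ψ_k((V_{q,n})_{q ∈ {1,…,Q}, n ∈ M_k}) for some function ψ_k, and suppose that for every k there is a function χ_k with (V_{q,n})_{q ∈ W_k, n ∈ {1,…,N}} = χ_k(X_1, …, X_K, (V_{q,n})_{q ∈ {1,…,Q}, n ∈ M_k}) almost surely. For S ⊆ {1,…,K} and integer j, let a^{j,S} be the number of files n such that the set {k : n ∈ M_k} has cardinality j and is contained in S; let X_S = (X_k)_{k∈S} and Y_{S^c} = ((V_{q,n})_{q ∈ ∪_{k∉S} W_k, n ∈ {1,…,N}}, (V_{q,n})_{q ∈ {1,…,Q}, n ∈ ∪_{k∉S} M_k}). Then for every subset S ⊆ {1,…,K}: H[X_S | Y_{S^c}] ≥ T·(Q/K)·(∑_{j=1}^{|S|} a^{j,S}·(|S|−j)/j)·log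 2, where H[·|·] denotes conditional Shannon entropy in nats. -/

import Mathlib

open Finset
open scoped Classical

/-- Shannon entropy (in nats) of a random variable `X` on a finite probability space
with probability mass function `p`. -/
noncomputable def shannonEnt {Ω : Type*} [Fintype Ω] {α : Type*} [Fintype α]
    (p : Ω → ℝ) (X : Ω → α) : ℝ :=
  ∑ x : α, Real.negMulLog (∑ ω ∈ Finset.univ.filter (fun ω => X ω = x), p ω)

/-- Conditional Shannon entropy (in nats): `H[X | Y] = H[(X,Y)] - H[Y]`. -/
noncomputable def condEnt {Ω : Type*} [Fintype Ω] {α β : Type*} [Fintype α] [Fintype β]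
    (p : Ω → ℝ) (X : Ω → α) (Y : Ω → β) : ℝ :=
  shannonEnt p (fun ω => (X ω, Y ω)) - shannonEnt p Y

namespace CDC
open Real

variable {Ω : Type*} [Fintype Ω]

noncomputable def pm (p : Ω → ℝ) {α : Type*} (X : Ω → α) (x : α) : ℝ :=
  ∑ ω ∈ Finset.univ.filter (fun ω => X ω = x), p ω

variable {p : Ω → ℝ}

lemma shannonEnt_eq {α : Type*} [Fintype α] (X : Ω → α) :
    shannonEnt p X = ∑ x : α, Real.negMulLog (pm p X x) := rfl

lemma pm_congr_fiber {α β : Type*} {X : Ω → α} {Y : Ω → β} {x : α} {y : β}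
    (h : ∀ ω, X ω = x ↔ Y ω = y) : pm p X x = pm p Y y := by
  unfold pm; congr 1; ext ω; simp [h ω]

lemma ent_restrict {α : Type*} [Fintype α] (Z : Ω → α) :
    shannonEnt p Z = ∑ z ∈ Finset.univ.filter (fun z => pm p Z z ≠ 0),
      Real.negMulLog (pm p Z z) := by
  rw [shannonEnt_eq]
  symm
  apply Finset.sum_subset (Finset.filter_subset _ _)
  intro z _ hz
  simp only [mem_filter, mem_univ, true_and, not_not] at hz
  rw [hz, Real.negMulLog_zero]

section hyp
variable (hp : ∀ ω, 0 ≤ p ω)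
include hp

lemma pm_nonneg {α : Type*} (X : Ω → α) (x : α) : 0 ≤ pm p X x :=
  Finset.sum_nonneg fun ω _ => hp ω

lemma pm_eq_pos_sum {α : Type*} (X : Ω → α) (x : α) :
    pm p X x = ∑ ω ∈ Finset.univ.filter (fun ω => X ω = x ∧ 0 < p ω), p ω := by
  unfold pm
  symm
  apply Finset.sum_subset
  · intro ω hω; simp only [mem_filter, mem_univ, true_and] at hω ⊢; exact hω.1
  · intro ω hω h2
    simp only [mem_filter, mem_univ, true_and] at hω h2
    by_contra hne
    exact h2 ⟨hω, lt_of_le_of_ne (hp ω) (Ne.symm hne)⟩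

lemma exists_support_of_pm_ne {α : Type*} {X : Ω → α} {x : α} (h : pm p X x ≠ 0) :
    ∃ ω, 0 < p ω ∧ X ω = x := by
  by_contra hc
  push_neg at hc
  apply h
  rw [pm_eq_pos_sum hp]
  apply Finset.sum_eq_zero
  intro ω hω
  simp only [mem_filter, mem_univ, true_and] at hω
  exact absurd hω.1 (hc ω hω.2)

/-- key helper for entropy congruence -/
lemma pm_push {α β : Type*} {X : Ω → α} {Y : Ω → β} (f : α → β) (g : β → α)
    (h1 : ∀ ω, 0 < p ω → Y ω = f (X ω))
    (h2 : ∀ ω, 0 < p ω → g (Y ω) = X ω)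
    {x : α} (hx : pm p X x ≠ 0) :
    pm p Y (f x) = pm p X x ∧ g (f x) = x := by
  obtain ⟨ω₀, hω₀, hX0⟩ := exists_support_of_pm_ne hp hx
  have hgf : g (f x) = x := by
    rw [← hX0, ← h1 ω₀ hω₀, h2 ω₀ hω₀]
  refine ⟨?_, hgf⟩
  rw [pm_eq_pos_sum hp, pm_eq_pos_sum hp]
  apply Finset.sum_congr _ (fun _ _ => rfl)
  ext ω
  simp only [mem_filter, mem_univ, true_and]
  constructor
  · rintro ⟨hY, hpω⟩
    refine ⟨?_, hpω⟩
    rw [← h2 ω hpω, hY, hgf]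
  · rintro ⟨hX, hpω⟩
    exact ⟨by rw [h1 ω hpω, hX], hpω⟩

lemma ent_congr {α β : Type*} [Fintype α] [Fintype β] {X : Ω → α} {Y : Ω → β}
    (f : α → β) (g : β → α)
    (h1 : ∀ ω, 0 < p ω → Y ω = f (X ω))
    (h2 : ∀ ω, 0 < p ω → g (Y ω) = X ω) :
    shannonEnt p X = shannonEnt p Y := by
  have h1' : ∀ ω, 0 < p ω → X ω = g (Y ω) := fun ω h => (h2 ω h).symm
  have h2' : ∀ ω, 0 < p ω → f (X ω) = Y ω := fun ω h => (h1 ω h).symm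
  rw [ent_restrict X, ent_restrict Y]
  apply Finset.sum_nbij' f g
  · intro x hxm
    simp only [mem_filter, mem_univ, true_and] at hxm ⊢
    rw [(pm_push hp f g h1 h2 hxm).1]; exact hxm
  · intro y hym
    simp only [mem_filter, mem_univ, true_and] at hym ⊢
    rw [(pm_push hp g f h1' h2' hym).1]; exact hym
  · intro x hxm
    simp only [mem_filter, mem_univ, true_and] at hxm
    exact (pm_push hp f g h1 h2 hxm).2
  · intro y hym
    simp only [mem_filter, mem_univ, true_and] at hym
    exact (pm_push hp g f h1' h2' hym).2
  · intro x hxm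
    simp only [mem_filter, mem_univ, true_and] at hxm
    rw [(pm_push hp f g h1 h2 hxm).1]

variable (hp1 : ∑ ω, p ω = 1)
include hp1

omit hp in
lemma sum_pm {α : Type*} [Fintype α] (X : Ω → α) : ∑ x, pm p X x = 1 := by
  rw [← hp1]
  exact Finset.sum_fiberwise_of_maps_to (fun ω _ => mem_univ _) p

lemma pm_le_one {α : Type*} [Fintype α] (X : Ω → α) (x : α) : pm p X x ≤ 1 := by
  rw [← sum_pm hp1 X]
  exact Finset.single_le_sum (fun x _ => pm_nonneg hp X x) (mem_univ x)

lemma ent_nonneg {α : Type*} [Fintype α] (X : Ω → α) : 0 ≤ shannonEnt p X := by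
  rw [shannonEnt_eq]
  exact Finset.sum_nonneg fun x _ =>
    Real.negMulLog_nonneg (pm_nonneg hp X x) (pm_le_one hp hp1 X x)

end hyp

end CDC

namespace CDC
open Real

variable {Ω : Type*} [Fintype Ω] {p : Ω → ℝ}

lemma pm_marg {α β : Type*} [Fintype α] (X : Ω → α) (Y : Ω → β) (y : β) :
    ∑ x : α, pm p (fun ω => (X ω, Y ω)) (x, y) = pm p Y y := by
  unfold pm
  rw [← Finset.sum_fiberwise_of_maps_to (g := X) (t := univ) (fun ω _ => mem_univ _) p]
  apply Finset.sum_congr rfl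
  intro x _
  congr 1
  ext ω
  simp [Prod.ext_iff, and_comm]

lemma negMulLog_add_le {a b : ℝ} (ha : 0 ≤ a) (hb : 0 ≤ b) :
    Real.negMulLog (a + b) ≤ Real.negMulLog a + Real.negMulLog b := by
  rcases eq_or_lt_of_le ha with h | ha'
  · simp [← h]
  rcases eq_or_lt_of_le hb with h | hb'
  · simp [← h]
  have l1 : Real.log a ≤ Real.log (a + b) := Real.log_le_log ha' (by linarith)
  have l2 : Real.log b ≤ Real.log (a + b) := Real.log_le_log hb' (by linarith)
  have m1 : a * Real.log a ≤ a * Real.log (a + b) := by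
    exact mul_le_mul_of_nonneg_left l1 ha
  have m2 : b * Real.log b ≤ b * Real.log (a + b) := by
    exact mul_le_mul_of_nonneg_left l2 hb
  simp only [Real.negMulLog]
  nlinarith
lemma negMulLog_sum_le {ι : Type*} (s : Finset ι) (f : ι → ℝ) (hf : ∀ i ∈ s, 0 ≤ f i) :
    Real.negMulLog (∑ i ∈ s, f i) ≤ ∑ i ∈ s, Real.negMulLog (f i) := by
  induction s using Finset.cons_induction with
  | empty => simp
  | cons a s ha ih =>
    rw [Finset.sum_cons, Finset.sum_cons]
    have h1 : Real.negMulLog (f a + ∑ i ∈ s, f i) ≤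
        Real.negMulLog (f a) + Real.negMulLog (∑ i ∈ s, f i) :=
      negMulLog_add_le (hf a (mem_cons_self a s))
        (Finset.sum_nonneg fun i hi => hf i (mem_cons_of_mem hi))
    have h2 := ih (fun i hi => hf i (mem_cons_of_mem hi))
    linarith

section hyp
variable (hp : ∀ ω, 0 ≤ p ω) (hp1 : ∑ ω, p ω = 1)
include hp hp1

lemma ent_le_ent_pair {α β : Type*} [Fintype α] [Fintype β] (X : Ω → α) (Y : Ω → β) :
    shannonEnt p Y ≤ shannonEnt p (fun ω => (X ω, Y ω)) := by
  rw [shannonEnt_eq, shannonEnt_eq]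
  rw [Fintype.sum_prod_type_right]
  apply Finset.sum_le_sum
  intro y _
  rw [← pm_marg X Y y]
  exact negMulLog_sum_le univ _ (fun x _ => pm_nonneg hp _ _)

lemma condEnt_nonneg {α β : Type*} [Fintype α] [Fintype β] (X : Ω → α) (Y : Ω → β) :
    0 ≤ condEnt p X Y := by
  have := ent_le_ent_pair hp hp1 X Y
  unfold condEnt
  linarith

end hyp
end CDC
namespace CDC
open Real
set_option linter.unusedSectionVars false

variable {Ω : Type*} [Fintype Ω] {p : Ω → ℝ}

section hyp
variable (hp : ∀ ω, 0 ≤ p ω) (hp1 : ∑ ω, p ω = 1)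
include hp hp1

/-- General congruence for conditional entropy. -/
lemma condEnt_congr {α α' γ γ' : Type*} [Fintype α] [Fintype α'] [Fintype γ] [Fintype γ']
    {A : Ω → α} {A' : Ω → α'} {C : Ω → γ} {C' : Ω → γ'}
    (f : α → γ → α') (g : α' → γ' → α) (F : γ → γ') (G : γ' → γ)
    (hf : ∀ ω, 0 < p ω → A' ω = f (A ω) (C ω))
    (hg : ∀ ω, 0 < p ω → g (A' ω) (C' ω) = A ω)
    (hF : ∀ ω, 0 < p ω → C' ω = F (C ω))
    (hG : ∀ ω, 0 < p ω → G (C' ω) = C ω) :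
    condEnt p A C = condEnt p A' C' := by
  unfold condEnt
  have e1 : shannonEnt p (fun ω => (A ω, C ω)) = shannonEnt p (fun ω => (A' ω, C' ω)) := by
    apply ent_congr hp (fun z => (f z.1 z.2, F z.2)) (fun z => (g z.1 z.2, G z.2))
    · intro ω hω; simp only; rw [← hf ω hω, ← hF ω hω]
    · intro ω hω; simp only; rw [hG ω hω, hg ω hω]
  have e2 : shannonEnt p C = shannonEnt p C' :=
    ent_congr hp F G hF hG
  rw [e1, e2]

/-- Chain rule: `H[(A,B) | C] = H[A | C] + H[B | (A,C)]`. -/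
lemma chainCond {α β γ : Type*} [Fintype α] [Fintype β] [Fintype γ]
    (A : Ω → α) (B : Ω → β) (C : Ω → γ) :
    condEnt p (fun ω => (A ω, B ω)) C
      = condEnt p A C + condEnt p B (fun ω => (A ω, C ω)) := by
  unfold condEnt
  have e : shannonEnt p (fun ω => ((A ω, B ω), C ω))
      = shannonEnt p (fun ω => (B ω, (A ω, C ω))) := by
    apply ent_congr hp (fun z => (z.1.2, (z.1.1, z.2))) (fun z => ((z.2.1, z.1), z.2.2))
    · intro ω hω; rfl
    · intro ω hω; rfl
  rw [e]; ring

/-- Swapping the two components of the first argument. -/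
lemma condEnt_swap {α β γ : Type*} [Fintype α] [Fintype β] [Fintype γ]
    (A : Ω → α) (B : Ω → β) (C : Ω → γ) :
    condEnt p (fun ω => (A ω, B ω)) C = condEnt p (fun ω => (B ω, A ω)) C := by
  apply condEnt_congr hp hp1 (fun z _ => (z.2, z.1)) (fun z _ => (z.2, z.1)) id id
  · intro ω hω; rfl
  · intro ω hω; rfl
  · intro ω hω; rfl
  · intro ω hω; rfl

end hyp
end CDC
namespace CDC
open Real
set_option linter.unusedSectionVars false

variable {Ω : Type*} [Fintype Ω] {p : Ω → ℝ}

section hyp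
variable (hp : ∀ ω, 0 ≤ p ω) (hp1 : ∑ ω, p ω = 1)
include hp hp1

set_option maxHeartbeats 2000000 in
/-- Conditioning on more reduces entropy: `H[A | (B,C)] ≤ H[A | C]`. -/
lemma condEnt_cond_le {α β γ : Type*} [Fintype α] [Fintype β] [Fintype γ]
    (A : Ω → α) (B : Ω → β) (C : Ω → γ) :
    condEnt p A (fun ω => (B ω, C ω)) ≤ condEnt p A C := by
  classical
  set r : α → β → γ → ℝ := fun a b c => pm p (fun ω => (A ω, (B ω, C ω))) (a, (b, c)) with hrdef
  set rbc : β → γ → ℝ := fun b c => ∑ a, r a b c with hrbcdef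
  set rac : α → γ → ℝ := fun a c => ∑ b, r a b c with hracdef
  set rc : γ → ℝ := fun c => ∑ a, rac a c with hrcdef
  have hrnn : ∀ a b c, 0 ≤ r a b c := fun a b c => pm_nonneg hp _ _
  have hbcnn : ∀ b c, 0 ≤ rbc b c := fun b c => Finset.sum_nonneg fun a _ => hrnn a b c
  have hacnn : ∀ a c, 0 ≤ rac a c := fun a c => Finset.sum_nonneg fun b _ => hrnn a b c
  have hcnn : ∀ c, 0 ≤ rc c := fun c => Finset.sum_nonneg fun a _ => hacnn a c
  have hrc_alt : ∀ c, rc c = ∑ b, rbc b c := by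
    intro c
    rw [hrcdef]
    simp only [hracdef, hrbcdef]
    exact Finset.sum_comm
  have hrc_a : ∀ c, rc c = ∑ a, rac a c := fun c => by rw [hrcdef]
  -- marginal identities
  have mBC : ∀ b c, rbc b c = pm p (fun ω => (B ω, C ω)) (b, c) := fun b c =>
    pm_marg A _ (b, c)
  have mAC : ∀ a c, rac a c = pm p (fun ω => (A ω, C ω)) (a, c) := by
    intro a c
    have h1 : ∀ b : β, r a b c = pm p (fun ω => (B ω, (A ω, C ω))) (b, (a, c)) := by
      intro b
      apply pm_congr_fiber
      intro ω
      simp only [Prod.mk.injEq]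
      tauto
    calc rac a c = ∑ b, pm p (fun ω => (B ω, (A ω, C ω))) (b, (a, c)) := by
          rw [hracdef]; exact Finset.sum_congr rfl fun b _ => h1 b
      _ = pm p (fun ω => (A ω, C ω)) (a, c) := pm_marg B _ (a, c)
  have mC : ∀ c, rc c = pm p C c := by
    intro c
    rw [hrc_alt]
    calc (∑ b, rbc b c) = ∑ b, pm p (fun ω => (B ω, C ω)) (b, c) :=
          Finset.sum_congr rfl fun b _ => mBC b c
      _ = pm p C c := pm_marg B C c
  -- entropy identities
  have HABC : shannonEnt p (fun ω => (A ω, (B ω, C ω)))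
      = ∑ a, ∑ b, ∑ c, Real.negMulLog (r a b c) := by
    rw [shannonEnt_eq, Fintype.sum_prod_type]
    exact Finset.sum_congr rfl fun a _ => by rw [Fintype.sum_prod_type]
  have HBC : shannonEnt p (fun ω => (B ω, C ω))
      = ∑ b, ∑ c, Real.negMulLog (rbc b c) := by
    rw [shannonEnt_eq, Fintype.sum_prod_type]
    exact Finset.sum_congr rfl fun b _ => Finset.sum_congr rfl fun c _ => by rw [mBC]
  have HAC : shannonEnt p (fun ω => (A ω, C ω))
      = ∑ a, ∑ c, Real.negMulLog (rac a c) := by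
    rw [shannonEnt_eq, Fintype.sum_prod_type]
    exact Finset.sum_congr rfl fun a _ => Finset.sum_congr rfl fun c _ => by rw [mAC]
  have HC : shannonEnt p C = ∑ c, Real.negMulLog (rc c) := by
    rw [shannonEnt_eq]
    exact Finset.sum_congr rfl fun c _ => by rw [mC]
  -- expansions of marginal entropies as triple sums
  have inner1 : ∀ b c, ∑ a, -(r a b c * Real.log (rbc b c)) = Real.negMulLog (rbc b c) := by
    intro b c
    rw [Real.negMulLog, Finset.sum_neg_distrib, ← Finset.sum_mul, neg_mul, hrbcdef]
  have S1 : ∑ a, ∑ b, ∑ c, -(r a b c * Real.log (rbc b c))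
      = ∑ b, ∑ c, Real.negMulLog (rbc b c) := by
    calc ∑ a, ∑ b, ∑ c, -(r a b c * Real.log (rbc b c))
        = ∑ b, ∑ a, ∑ c, -(r a b c * Real.log (rbc b c)) := Finset.sum_comm
      _ = ∑ b, ∑ c, ∑ a, -(r a b c * Real.log (rbc b c)) :=
          Finset.sum_congr rfl fun b _ => Finset.sum_comm
      _ = ∑ b, ∑ c, Real.negMulLog (rbc b c) :=
          Finset.sum_congr rfl fun b _ => Finset.sum_congr rfl fun c _ => inner1 b c
  have inner2 : ∀ a c, ∑ b, -(r a b c * Real.log (rac a c)) = Real.negMulLog (rac a c) := by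
    intro a c
    rw [Real.negMulLog, Finset.sum_neg_distrib, ← Finset.sum_mul, neg_mul, hracdef]
  have S2 : ∑ a, ∑ b, ∑ c, -(r a b c * Real.log (rac a c))
      = ∑ a, ∑ c, Real.negMulLog (rac a c) := by
    apply Finset.sum_congr rfl; intro a _
    calc ∑ b, ∑ c, -(r a b c * Real.log (rac a c))
        = ∑ c, ∑ b, -(r a b c * Real.log (rac a c)) := Finset.sum_comm
      _ = ∑ c, Real.negMulLog (rac a c) := Finset.sum_congr rfl fun c _ => inner2 a c
  have inner3 : ∀ c, ∑ a, ∑ b, -(r a b c * Real.log (rc c)) = Real.negMulLog (rc c) := by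
    intro c
    have e : ∀ a, ∑ b, -(r a b c * Real.log (rc c)) = -(rac a c * Real.log (rc c)) := by
      intro a
      rw [Finset.sum_neg_distrib, ← Finset.sum_mul, hracdef]
    rw [Finset.sum_congr rfl fun a _ => e a, Real.negMulLog, Finset.sum_neg_distrib,
      ← Finset.sum_mul, neg_mul, hrc_a]
  have S3 : ∑ a, ∑ b, ∑ c, -(r a b c * Real.log (rc c))
      = ∑ c, Real.negMulLog (rc c) := by
    calc ∑ a, ∑ b, ∑ c, -(r a b c * Real.log (rc c))
        = ∑ a, ∑ c, ∑ b, -(r a b c * Real.log (rc c)) :=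
          Finset.sum_congr rfl fun a _ => Finset.sum_comm
      _ = ∑ c, ∑ a, ∑ b, -(r a b c * Real.log (rc c)) := Finset.sum_comm
      _ = ∑ c, Real.negMulLog (rc c) := Finset.sum_congr rfl fun c _ => inner3 c
  -- total mass one
  have total : ∑ a, ∑ b, ∑ c, r a b c = 1 := by
    have h := sum_pm hp1 (fun ω => (A ω, (B ω, C ω)))
    rw [Fintype.sum_prod_type] at h
    calc ∑ a, ∑ b, ∑ c, r a b c
        = ∑ a, ∑ y : β × γ, pm p (fun ω => (A ω, (B ω, C ω))) (a, y) := by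
          apply Finset.sum_congr rfl; intro a _
          rw [Fintype.sum_prod_type]
      _ = 1 := h
  -- pointwise bound
  set U : α → β → γ → ℝ := fun a b c =>
    (if 0 < rc c then rac a c * rbc b c / rc c else 0) - r a b c with hUdef
  have pointwise : ∀ a b c,
      Real.negMulLog (r a b c) + r a b c * Real.log (rbc b c)
        + r a b c * Real.log (rac a c) - r a b c * Real.log (rc c) ≤ U a b c := by
    intro a b c
    rcases eq_or_lt_of_le (hrnn a b c) with hz | hpos
    · rw [← hz]
      simp only [hUdef, Real.negMulLog_zero, zero_mul, add_zero, sub_zero, zero_add]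
      have : 0 ≤ (if 0 < rc c then rac a c * rbc b c / rc c else 0) := by
        split_ifs with h
        · have := hacnn a c; have := hbcnn b c; positivity
        · exact le_refl 0
      linarith
    · have hbc : 0 < rbc b c := lt_of_lt_of_le hpos
        (Finset.single_le_sum (fun a' _ => hrnn a' b c) (Finset.mem_univ a))
      have hac : 0 < rac a c := lt_of_lt_of_le hpos
        (Finset.single_le_sum (fun b' _ => hrnn a b' c) (Finset.mem_univ b))
      have hc : 0 < rc c := lt_of_lt_of_le hac
        (by rw [hrc_a]
            exact Finset.single_le_sum (fun a' _ => hacnn a' c) (Finset.mem_univ a))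
      rw [hUdef]
      simp only [if_pos hc]
      set x : ℝ := rac a c * rbc b c / (rc c * r a b c) with hxdef
      have hx : 0 < x := by positivity
      have hlogx : Real.log x = Real.log (rac a c) + Real.log (rbc b c)
          - Real.log (rc c) - Real.log (r a b c) := by
        rw [hxdef, Real.log_div (by positivity) (by positivity),
          Real.log_mul (ne_of_gt hac) (ne_of_gt hbc),
          Real.log_mul (ne_of_gt hc) (ne_of_gt hpos)]
        ring
      have hle : r a b c * Real.log x ≤ r a b c * (x - 1) :=
        mul_le_mul_of_nonneg_left (Real.log_le_sub_one_of_pos hx) (hrnn a b c)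
      have hrx : r a b c * (x - 1) = rac a c * rbc b c / rc c - r a b c := by
        rw [hxdef]
        field_simp
      have hT : Real.negMulLog (r a b c) + r a b c * Real.log (rbc b c)
          + r a b c * Real.log (rac a c) - r a b c * Real.log (rc c)
          = r a b c * Real.log x := by
        rw [Real.negMulLog, hlogx]
        ring
      rw [hT]
      linarith
  -- sum of rc is one
  have rcsum : ∑ c, rc c = 1 := by
    calc ∑ c, rc c = ∑ c, ∑ a, ∑ b, r a b c := by
          apply Finset.sum_congr rfl; intro c _
          rw [hrc_a]
      _ = ∑ a, ∑ c, ∑ b, r a b c := Finset.sum_comm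
      _ = ∑ a, ∑ b, ∑ c, r a b c :=
          Finset.sum_congr rfl fun a _ => Finset.sum_comm
      _ = 1 := total
  -- sum of the ite term
  have ite_inner : ∀ c,
      ∑ a, ∑ b, (if 0 < rc c then rac a c * rbc b c / rc c else 0) ≤ rc c := by
    intro c
    by_cases h : 0 < rc c
    · simp only [if_pos h]
      have e1 : ∀ a : α, ∑ b, rac a c * rbc b c / rc c = rac a c * rc c / rc c := by
        intro a
        rw [← Finset.sum_div, ← Finset.mul_sum, ← hrc_alt]
      refine le_of_eq ?_
      calc ∑ a, ∑ b, rac a c * rbc b c / rc c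
          = ∑ a, rac a c * rc c / rc c := Finset.sum_congr rfl fun a _ => e1 a
        _ = ∑ a, rac a c := Finset.sum_congr rfl fun a _ => by
              rw [mul_div_assoc, div_self (ne_of_gt h), mul_one]
        _ = rc c := (hrc_a c).symm
    · simp only [if_neg h]
      simp only [Finset.sum_const_zero]
      exact hcnn c
  have ite_sum : ∑ a, ∑ b, ∑ c, (if 0 < rc c then rac a c * rbc b c / rc c else 0) ≤ 1 := by
    calc ∑ a, ∑ b, ∑ c, (if 0 < rc c then rac a c * rbc b c / rc c else 0)
        = ∑ a, ∑ c, ∑ b, (if 0 < rc c then rac a c * rbc b c / rc c else 0) :=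
          Finset.sum_congr rfl fun a _ => Finset.sum_comm
      _ = ∑ c, ∑ a, ∑ b, (if 0 < rc c then rac a c * rbc b c / rc c else 0) :=
          Finset.sum_comm
      _ ≤ ∑ c, rc c := Finset.sum_le_sum fun c _ => ite_inner c
      _ = 1 := rcsum
  -- sum of U is nonpositive
  have Usum : ∑ a, ∑ b, ∑ c, U a b c ≤ 0 := by
    have expand : ∑ a, ∑ b, ∑ c, U a b c
        = (∑ a, ∑ b, ∑ c, (if 0 < rc c then rac a c * rbc b c / rc c else 0))
          - ∑ a, ∑ b, ∑ c, r a b c := by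
      rw [hUdef]
      simp only [Finset.sum_sub_distrib]
    rw [expand, total]
    linarith
  -- put everything together
  have sumT : ∑ a, ∑ b, ∑ c,
      (Real.negMulLog (r a b c) + r a b c * Real.log (rbc b c)
        + r a b c * Real.log (rac a c) - r a b c * Real.log (rc c)) ≤ 0 := by
    calc ∑ a, ∑ b, ∑ c,
        (Real.negMulLog (r a b c) + r a b c * Real.log (rbc b c)
          + r a b c * Real.log (rac a c) - r a b c * Real.log (rc c))
        ≤ ∑ a, ∑ b, ∑ c, U a b c := by
          apply Finset.sum_le_sum; intro a _
          apply Finset.sum_le_sum; intro b _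
          apply Finset.sum_le_sum; intro c _
          exact pointwise a b c
      _ ≤ 0 := Usum
  have expandT : ∑ a, ∑ b, ∑ c,
      (Real.negMulLog (r a b c) + r a b c * Real.log (rbc b c)
        + r a b c * Real.log (rac a c) - r a b c * Real.log (rc c))
      = (∑ a, ∑ b, ∑ c, Real.negMulLog (r a b c))
        - (∑ b, ∑ c, Real.negMulLog (rbc b c))
        - (∑ a, ∑ c, Real.negMulLog (rac a c))
        + (∑ c, Real.negMulLog (rc c)) := by
    rw [← S1, ← S2, ← S3]
    simp only [Finset.sum_add_distrib, Finset.sum_sub_distrib, Finset.sum_neg_distrib]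
    ring
  have final : (∑ a, ∑ b, ∑ c, Real.negMulLog (r a b c))
      - (∑ b, ∑ c, Real.negMulLog (rbc b c))
      - (∑ a, ∑ c, Real.negMulLog (rac a c))
      + (∑ c, Real.negMulLog (rc c)) ≤ 0 := by
    rw [← expandT]; exact sumT
  unfold condEnt
  rw [HABC, HBC, HAC, HC]
  linarith

end hyp
end CDC
namespace CDC
open Real
set_option linter.unusedSectionVars false

variable {Ω : Type*} [Fintype Ω] {p : Ω → ℝ}

section hyp
variable (hp : ∀ ω, 0 ≤ p ω) (hp1 : ∑ ω, p ω = 1)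
include hp hp1

/-- congruence in the first argument only -/
lemma condEnt_congr_left {α α' γ : Type*} [Fintype α] [Fintype α'] [Fintype γ]
    {A : Ω → α} {A' : Ω → α'} {C : Ω → γ}
    (f : α → γ → α') (g : α' → γ → α)
    (hf : ∀ ω, 0 < p ω → A' ω = f (A ω) (C ω))
    (hg : ∀ ω, 0 < p ω → g (A' ω) (C ω) = A ω) :
    condEnt p A C = condEnt p A' C :=
  condEnt_congr hp hp1 f g id id hf hg (fun _ _ => rfl) (fun _ _ => rfl)

/-- congruence in the conditioning argument only -/
lemma condEnt_congr_right {α γ γ' : Type*} [Fintype α] [Fintype γ] [Fintype γ']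
    {A : Ω → α} {C : Ω → γ} {C' : Ω → γ'}
    (F : γ → γ') (G : γ' → γ)
    (hF : ∀ ω, 0 < p ω → C' ω = F (C ω))
    (hG : ∀ ω, 0 < p ω → G (C' ω) = C ω) :
    condEnt p A C = condEnt p A C' :=
  condEnt_congr hp hp1 (fun a _ => a) (fun a _ => a) F G
    (fun _ _ => rfl) (fun _ _ => rfl) hF hG

/-- if `C'` is a function of `C`, conditioning on `C` gives less entropy -/
lemma condEnt_mono_cond {α γ γ' : Type*} [Fintype α] [Fintype γ] [Fintype γ']
    (A : Ω → α) (C : Ω → γ) (C' : Ω → γ')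
    (F : γ → γ') (hF : ∀ ω, 0 < p ω → C' ω = F (C ω)) :
    condEnt p A C ≤ condEnt p A C' := by
  have e : condEnt p A C = condEnt p A (fun ω => (C ω, C' ω)) := by
    apply condEnt_congr_right hp hp1 (fun c => (c, F c)) Prod.fst
    · intro ω hω
      have := hF ω hω
      simp only [this]
    · intro ω hω; rfl
  rw [e]
  exact condEnt_cond_le hp hp1 A C C'

/-- subadditivity for a pair -/
lemma condEnt_pair_le_add {α β γ : Type*} [Fintype α] [Fintype β] [Fintype γ]
    (A : Ω → α) (B : Ω → β) (C : Ω → γ) :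
    condEnt p (fun ω => (A ω, B ω)) C ≤ condEnt p A C + condEnt p B C := by
  rw [chainCond hp hp1 A B C]
  have h2 : condEnt p B (fun ω => (A ω, C ω)) ≤ condEnt p B C :=
    condEnt_cond_le hp hp1 B A C
  linarith

/-- entropy of a uniform random variable -/
lemma ent_uniform {γ : Type*} [Fintype γ] (X : Ω → γ) (hcpos : 0 < Fintype.card γ)
    (h : ∀ x, pm p X x = (Fintype.card γ : ℝ)⁻¹) :
    shannonEnt p X = Real.log (Fintype.card γ) := by
  have hc : (0 : ℝ) < (Fintype.card γ : ℝ) := by exact_mod_cast hcpos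
  rw [shannonEnt_eq]
  calc (∑ x : γ, Real.negMulLog (pm p X x))
      = ∑ _x : γ, Real.negMulLog ((Fintype.card γ : ℝ)⁻¹) :=
        Finset.sum_congr rfl fun x _ => by rw [h x]
    _ = (Fintype.card γ : ℝ) * Real.negMulLog ((Fintype.card γ : ℝ)⁻¹) := by
        rw [Finset.sum_const, Finset.card_univ, nsmul_eq_mul]
    _ = Real.log (Fintype.card γ) := by
        rw [Real.negMulLog, Real.log_inv]
        field_simp

end hyp

/-- helper: functions on a `cons` from a pair -/
def consPair {ι : Type*} [DecidableEq ι] {a : ι} {S : Finset ι} (ha : a ∉ S)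
    {β : ι → Type*} (pr : β a × ((k : {k // k ∈ S}) → β k.1))
    (k : {k // k ∈ Finset.cons a S ha}) : β k.1 :=
  if h : k.1 = a then cast (congrArg β h).symm pr.1
  else pr.2 ⟨k.1, (Finset.mem_cons.mp k.2).resolve_left h⟩

section hyp2
variable (hp : ∀ ω, 0 ≤ p ω) (hp1 : ∑ ω, p ω = 1)
include hp hp1

/-- subadditivity for a finite tuple of random variables -/
lemma condEnt_tuple_le_sum {ι : Type*} [DecidableEq ι] (S : Finset ι)
    (β : ι → Type*) [∀ i, Fintype (β i)] (X : ∀ i, Ω → β i)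
    {γ : Type*} [Fintype γ] (Z : Ω → γ) :
    condEnt p (fun ω (k : {k // k ∈ S}) => X k.1 ω) Z
      ≤ ∑ k ∈ S, condEnt p (X k) Z := by
  induction S using Finset.cons_induction with
  | empty =>
    rw [Finset.sum_empty]
    have e : condEnt p (fun ω (k : {k // k ∈ (∅ : Finset ι)}) => X k.1 ω) Z
        = condEnt p (fun _ => (0 : Fin 1)) Z := by
      apply condEnt_congr_left hp hp1 (fun _ _ => (0 : Fin 1))
        (fun _ _ (k : {k // k ∈ (∅ : Finset ι)}) => (Finset.notMem_empty k.1 k.2).elim)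
      · intro ω hω; exact Subsingleton.elim _ _
      · intro ω hω
        funext k
        exact (Finset.notMem_empty k.1 k.2).elim
    rw [e]
    have e2 : condEnt p (fun _ => (0 : Fin 1)) Z = 0 := by
      unfold condEnt
      have : shannonEnt p (fun ω => ((0 : Fin 1), Z ω)) = shannonEnt p Z := by
        apply ent_congr hp Prod.snd (fun z => ((0 : Fin 1), z))
        · intro ω hω; rfl
        · intro ω hω; rfl
      rw [this]; ring
    rw [e2]
  | cons a S ha ih =>
    have e : condEnt p (fun ω (k : {k // k ∈ Finset.cons a S ha}) => X k.1 ω) Z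
        = condEnt p (fun ω => (X a ω, fun (k : {k // k ∈ S}) => X k.1 ω)) Z := by
      apply condEnt_congr_left hp hp1
        (fun xt _ => (xt ⟨a, Finset.mem_cons_self a S⟩,
          fun (k : {k // k ∈ S}) => xt ⟨k.1, Finset.mem_cons_of_mem k.2⟩))
        (fun pr _ => consPair ha pr)
      · intro ω hω; rfl
      · intro ω hω
        funext k
        rcases k with ⟨kv, hk⟩
        unfold consPair
        by_cases h : kv = a
        · subst h
          simp
        · simp only [dif_neg h]
    rw [e, Finset.sum_cons]
    calc condEnt p (fun ω => (X a ω, fun (k : {k // k ∈ S}) => X k.1 ω)) Z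
        ≤ condEnt p (X a) Z + condEnt p (fun ω (k : {k // k ∈ S}) => X k.1 ω) Z :=
          condEnt_pair_le_add hp hp1 _ _ _
      _ ≤ condEnt p (X a) Z + ∑ k ∈ S, condEnt p (X k) Z := by
          have := ih
          linarith

end hyp2
end CDC
namespace CDC
open Real
set_option linter.unusedSectionVars false

section vt
variable {Ω : Type*} [Fintype Ω] {p : Ω → ℝ}
variable {Q N T : ℕ} {α : Type*} [Fintype α]

/-- the canonical tuple of intermediate values indexed by a finite set of coordinates -/
noncomputable def VT (V : Fin Q → Fin N → Ω → α) (C : Finset (Fin Q × Fin N)) :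
    Ω → ({c // c ∈ C} → α) := fun ω c => V c.1.1 c.1.2 ω

variable (hp : ∀ ω, 0 ≤ p ω) (hp1 : ∑ ω, p ω = 1)
variable {V : Fin Q → Fin N → Ω → α}
variable (hcard : Fintype.card α = 2 ^ T)
variable (hunif : ∀ q n (x : α),
      ∑ ω ∈ Finset.univ.filter (fun ω => V q n ω = x), p ω = 1 / 2 ^ T)
variable (hindep : ∀ x : Fin Q → Fin N → α,
      ∑ ω ∈ Finset.univ.filter (fun ω => ∀ q n, V q n ω = x q n), p ω
        = ∏ q, ∏ n, ∑ ω ∈ Finset.univ.filter (fun ω => V q n ω = x q n), p ω)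

include hunif hindep in
lemma pm_full (x : Fin Q → Fin N → α) :
    pm p (fun ω (q : Fin Q) (n : Fin N) => V q n ω) x = (((2:ℝ)^T)⁻¹)^(Q*N) := by
  have h0 : pm p (fun ω (q : Fin Q) (n : Fin N) => V q n ω) x
      = ∑ ω ∈ Finset.univ.filter (fun ω => ∀ q n, V q n ω = x q n), p ω := by
    unfold pm; congr 1; ext ω
    simp [funext_iff]
  rw [h0, hindep x]
  have h1 : ∀ q n, (∑ ω ∈ Finset.univ.filter (fun ω => V q n ω = x q n), p ω)
      = ((2:ℝ)^T)⁻¹ := by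
    intro q n; rw [hunif q n (x q n), one_div]
  calc (∏ q, ∏ n, ∑ ω ∈ Finset.univ.filter (fun ω => V q n ω = x q n), p ω)
      = ∏ _q : Fin Q, ∏ _n : Fin N, ((2:ℝ)^T)⁻¹ :=
        Finset.prod_congr rfl fun q _ => Finset.prod_congr rfl fun n _ => h1 q n
    _ = (((2:ℝ)^T)⁻¹)^(Q*N) := by
        rw [Finset.prod_const, Finset.prod_const, Finset.card_univ, Finset.card_univ,
          Fintype.card_fin, Fintype.card_fin, ← pow_mul, mul_comm N Q]

lemma card_compat (C : Finset (Fin Q × Fin N)) (y : {c // c ∈ C} → α) :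
    (Finset.univ.filter (fun x : Fin Q → Fin N → α =>
        ∀ c : {c // c ∈ C}, x c.1.1 c.1.2 = y c)).card
      = Fintype.card α ^ (Q * N - C.card) := by
  classical
  have := Finset.card_nbij'
    (i := fun (x : Fin Q → Fin N → α) (c : {c // c ∈ Cᶜ}) => x c.1.1 c.1.2)
    (j := fun (z : {c // c ∈ Cᶜ} → α) (q : Fin Q) (n : Fin N) =>
      if h : (q, n) ∈ C then y ⟨(q, n), h⟩ else z ⟨(q, n), Finset.mem_compl.mpr h⟩)
    (s := Finset.univ.filter (fun x : Fin Q → Fin N → α =>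
        ∀ c : {c // c ∈ C}, x c.1.1 c.1.2 = y c))
    (t := Finset.univ)
    (by intro a _; exact Finset.mem_univ _)
    (by
      intro z _
      simp only [Finset.mem_coe, Finset.mem_filter, Finset.mem_univ, true_and]
      intro c
      rcases c with ⟨⟨q, n⟩, hc⟩
      simp only [dif_pos hc])
    (by
      intro x hx
      simp only [Finset.mem_coe, Finset.mem_filter, Finset.mem_univ, true_and] at hx
      funext q n
      by_cases h : (q, n) ∈ C
      · simp only [dif_pos h]
        exact (hx ⟨(q, n), h⟩).symm
      · simp only [dif_neg h])
    (by
      intro z _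
      funext c
      rcases c with ⟨⟨q, n⟩, hc⟩
      have h : (q, n) ∉ C := Finset.mem_compl.mp hc
      simp only [dif_neg h])
  rw [this, Finset.card_univ, Fintype.card_fun]
  congr 1
  rw [Fintype.card_coe, Finset.card_compl]
  congr 1
  rw [Fintype.card_prod, Fintype.card_fin, Fintype.card_fin]

include hp hunif hindep in
set_option maxHeartbeats 1000000 in
lemma pm_VT (C : Finset (Fin Q × Fin N)) (y : {c // c ∈ C} → α) (hcard' : Fintype.card α = 2 ^ T) :
    pm p (VT V C) y = (((2:ℝ)^T)⁻¹)^C.card := by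
  classical
  set t := Finset.univ.filter (fun x : Fin Q → Fin N → α =>
      ∀ c : {c // c ∈ C}, x c.1.1 c.1.2 = y c) with htdef
  set J : Ω → (Fin Q → Fin N → α) := fun ω q n => V q n ω with hJdef
  have step1 : pm p (VT V C) y = ∑ x ∈ t, pm p J x := by
    have fib : ∑ x ∈ t, ∑ ω ∈ (Finset.univ.filter (fun ω => VT V C ω = y)).filter
        (fun ω => J ω = x), p ω = ∑ ω ∈ Finset.univ.filter (fun ω => VT V C ω = y), p ω := by
      apply Finset.sum_fiberwise_of_maps_to
      intro ω hω
      simp only [Finset.mem_filter, Finset.mem_univ, true_and] at hω ⊢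
      rw [htdef]
      simp only [Finset.mem_filter, Finset.mem_univ, true_and]
      intro c
      rw [hJdef]
      calc V c.1.1 c.1.2 ω = VT V C ω c := rfl
        _ = y c := by rw [hω]
    have inner : ∀ x ∈ t, (Finset.univ.filter (fun ω => VT V C ω = y)).filter
        (fun ω => J ω = x) = Finset.univ.filter (fun ω => J ω = x) := by
      intro x hx
      rw [htdef] at hx
      simp only [Finset.mem_filter, Finset.mem_univ, true_and] at hx
      ext ω
      simp only [Finset.mem_filter, Finset.mem_univ, true_and]
      constructor
      · rintro ⟨_, h2⟩; exact h2
      · intro h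
        refine ⟨?_, h⟩
        funext c
        calc VT V C ω c = J ω c.1.1 c.1.2 := rfl
          _ = x c.1.1 c.1.2 := by rw [h]
          _ = y c := hx c
    calc pm p (VT V C) y = ∑ ω ∈ Finset.univ.filter (fun ω => VT V C ω = y), p ω := by
          unfold pm
          congr!
      _ = ∑ x ∈ t, ∑ ω ∈ (Finset.univ.filter (fun ω => VT V C ω = y)).filter
          (fun ω => J ω = x), p ω := fib.symm
      _ = ∑ x ∈ t, ∑ ω ∈ Finset.univ.filter (fun ω => J ω = x), p ω :=
          Finset.sum_congr rfl fun x hx => by rw [inner x hx]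
      _ = ∑ x ∈ t, pm p J x := by
          unfold pm
          congr!
  rw [step1]
  have step2 : ∀ x ∈ t, pm p J x = (((2:ℝ)^T)⁻¹)^(Q*N) := fun x _ =>
    pm_full hunif hindep x
  rw [Finset.sum_congr rfl step2, Finset.sum_const, nsmul_eq_mul]
  have hle : C.card ≤ Q * N := by
    have h := Finset.card_le_univ C
    simpa [Finset.card_univ, Fintype.card_prod] using h
  have hcC : (t.card : ℝ) = ((2:ℝ)^T)^(Q*N - C.card) := by
    rw [htdef, card_compat C y, hcard']
    push_cast
    ring
  rw [hcC]
  have hb : (0:ℝ) < (2:ℝ)^T := by positivity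
  have hsum : (Q*N - C.card) + C.card = Q*N := Nat.sub_add_cancel hle
  calc ((2:ℝ)^T)^(Q*N - C.card) * (((2:ℝ)^T)⁻¹)^(Q*N)
      = ((2:ℝ)^T)^(Q*N - C.card)
        * ((((2:ℝ)^T)⁻¹)^(Q*N - C.card) * (((2:ℝ)^T)⁻¹)^C.card) := by
        rw [← pow_add, hsum]
    _ = (((2:ℝ)^T) * ((2:ℝ)^T)⁻¹)^(Q*N - C.card) * (((2:ℝ)^T)⁻¹)^C.card := by
        rw [mul_pow]; ring
    _ = (((2:ℝ)^T)⁻¹)^C.card := by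
        rw [mul_inv_cancel₀ (ne_of_gt hb), one_pow, one_mul]

end vt
end CDC
namespace CDC
open Real
set_option linter.unusedSectionVars false

section vt2
variable {Ω : Type*} [Fintype Ω] {p : Ω → ℝ}
variable {Q N T : ℕ} {α : Type*} [Fintype α]
variable (hp : ∀ ω, 0 ≤ p ω) (hp1 : ∑ ω, p ω = 1)
variable {V : Fin Q → Fin N → Ω → α}
variable (hcard : Fintype.card α = 2 ^ T)
variable (hunif : ∀ q n (x : α),
      ∑ ω ∈ Finset.univ.filter (fun ω => V q n ω = x), p ω = 1 / 2 ^ T)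
variable (hindep : ∀ x : Fin Q → Fin N → α,
      ∑ ω ∈ Finset.univ.filter (fun ω => ∀ q n, V q n ω = x q n), p ω
        = ∏ q, ∏ n, ∑ ω ∈ Finset.univ.filter (fun ω => V q n ω = x q n), p ω)

/-- combine a pair of restrictions into a function on the union -/
noncomputable def unionPair {A B : Finset (Fin Q × Fin N)}
    (z : ({c // c ∈ A} → α) × ({c // c ∈ B} → α)) (c : {c // c ∈ A ∪ B}) : α :=
  if h : c.1 ∈ A then z.1 ⟨c.1, h⟩
  else z.2 ⟨c.1, (Finset.mem_union.mp c.2).resolve_left h⟩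

/-- split a function on the union into a pair of restrictions -/
def unionSplit {A B : Finset (Fin Q × Fin N)} (u : {c // c ∈ A ∪ B} → α) :
    ({c // c ∈ A} → α) × ({c // c ∈ B} → α) :=
  (fun c => u ⟨c.1, Finset.mem_union_left _ c.2⟩,
   fun c => u ⟨c.1, Finset.mem_union_right _ c.2⟩)

lemma unionPair_spec {A B : Finset (Fin Q × Fin N)} (ω : Ω) :
    VT V (A ∪ B) ω = unionPair (VT V A ω, VT V B ω) := by
  funext c
  unfold unionPair
  by_cases h : c.1 ∈ A
  · simp only [dif_pos h]; rfl
  · simp only [dif_neg h]; rfl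

include hp hp1 hcard hunif hindep

lemma ent_VT (C : Finset (Fin Q × Fin N)) :
    shannonEnt p (VT V C) = (C.card : ℝ) * ((T:ℝ) * Real.log 2) := by
  classical
  have hcγ : Fintype.card ({c // c ∈ C} → α) = 2 ^ (T * C.card) := by
    rw [Fintype.card_fun, Fintype.card_coe, hcard, ← pow_mul]
  have hpos : 0 < Fintype.card ({c // c ∈ C} → α) := by
    rw [hcγ]; positivity
  have hpm : ∀ y, pm p (VT V C) y = (Fintype.card ({c // c ∈ C} → α) : ℝ)⁻¹ := by
    intro y
    rw [pm_VT hp hunif hindep C y hcard, hcγ]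
    rw [inv_pow, ← pow_mul]
    norm_cast
  rw [ent_uniform hp hp1 (VT V C) hpos hpm, hcγ]
  have hc2 : ((2 ^ (T * C.card) : ℕ) : ℝ) = (2:ℝ) ^ (T * C.card) := by push_cast; ring
  rw [hc2, Real.log_pow]
  push_cast
  ring

lemma ent_VT_pair (A B : Finset (Fin Q × Fin N)) :
    shannonEnt p (fun ω => (VT V A ω, VT V B ω))
      = ((A ∪ B).card : ℝ) * ((T:ℝ) * Real.log 2) := by
  have e : shannonEnt p (fun ω => (VT V A ω, VT V B ω)) = shannonEnt p (VT V (A ∪ B)) := by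
    apply ent_congr hp (fun z => unionPair z) (fun u => unionSplit u)
    · intro ω _; exact unionPair_spec ω
    · intro ω _; rfl
  rw [e, ent_VT hp hp1 hcard hunif hindep]

lemma condEnt_VT (A B : Finset (Fin Q × Fin N)) :
    condEnt p (VT V A) (VT V B)
      = ((A ∪ B).card : ℝ) * ((T:ℝ) * Real.log 2)
        - (B.card : ℝ) * ((T:ℝ) * Real.log 2) := by
  unfold condEnt
  rw [ent_VT_pair hp hp1 hcard hunif hindep, ent_VT hp hp1 hcard hunif hindep]

omit hcard hunif hindep in
lemma cvt2 {δ : Type*} [Fintype δ] (Xv : Ω → δ) (A B : Finset (Fin Q × Fin N)) :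
    condEnt p Xv (fun ω => (VT V A ω, VT V B ω)) = condEnt p Xv (VT V (A ∪ B)) := by
  apply condEnt_congr_right hp hp1 (fun z => unionPair z) (fun u => unionSplit u)
  · intro ω _; exact unionPair_spec ω
  · intro ω _; rfl

omit hcard hunif hindep in
lemma cvt3 {δ : Type*} [Fintype δ] (Xv : Ω → δ) (A B C : Finset (Fin Q × Fin N)) :
    condEnt p Xv (fun ω => (VT V A ω, (VT V B ω, VT V C ω)))
      = condEnt p Xv (VT V (A ∪ (B ∪ C))) := by
  have e1 : condEnt p Xv (fun ω => (VT V A ω, (VT V B ω, VT V C ω)))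
      = condEnt p Xv (fun ω => (VT V A ω, VT V (B ∪ C) ω)) := by
    apply condEnt_congr_right hp hp1
      (fun z => (z.1, unionPair z.2)) (fun z => (z.1, unionSplit z.2))
    · intro ω _
      simp only
      rw [unionPair_spec (V := V) ω]
    · intro ω _; rfl
  rw [e1]
  exact cvt2 hp hp1 Xv A (B ∪ C)

end vt2
end CDC
namespace CDC
open Finset Real
set_option linter.unusedSectionVars false

section comb
variable {Q N K : ℕ}
variable (M : Fin K → Finset (Fin N)) (W : Fin K → Finset (Fin Q))

/-- the set of nodes mapping file `n` -/
def Uf (n : Fin N) : Finset (Fin K) := Finset.univ.filter (fun k => n ∈ M k)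

/-- the coordinates determined by `Y_{Sᶜ}` -/
def BS (S : Finset (Fin K)) : Finset (Fin Q × Fin N) :=
  (Sᶜ.biUnion W) ×ˢ Finset.univ ∪ Finset.univ ×ˢ (Sᶜ.biUnion M)

/-- files mapped only inside `S` and not at `k` -/
def Dk (S : Finset (Fin K)) (k : Fin K) : Finset (Fin N) :=
  Finset.univ.filter (fun n => Uf M n ⊆ S ∧ n ∉ M k)

/-- files mapped only inside `S`, and mapped somewhere -/
def PS (S : Finset (Fin K)) : Finset (Fin N) :=
  Finset.univ.filter (fun n => Uf M n ⊆ S ∧ 1 ≤ (Uf M n).card)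

lemma notmem_biUnionM {S : Finset (Fin K)} {n : Fin N} :
    n ∉ Sᶜ.biUnion M ↔ Uf M n ⊆ S := by
  simp only [Finset.mem_biUnion, Finset.mem_compl, not_exists]
  constructor
  · intro h k hk
    simp only [Uf, Finset.mem_filter, Finset.mem_univ, true_and] at hk
    by_contra hkS
    exact (h k) ⟨hkS, hk⟩
  · intro h k
    rintro ⟨hkS, hkM⟩
    exact hkS (h (by simp only [Uf, Finset.mem_filter, Finset.mem_univ, true_and]; exact hkM))

lemma BS_erase (hWdisj : ∀ j k, j ≠ k → Disjoint (W j) (W k))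
    {S : Finset (Fin K)} {k : Fin K} (hk : k ∈ S) :
    (W k ×ˢ Finset.univ) ∪ ((Finset.univ ×ˢ M k) ∪ BS M W S) = BS M W (S.erase k) := by
  have hcompl : (S.erase k)ᶜ = insert k Sᶜ := by
    ext i
    simp only [Finset.mem_compl, Finset.mem_erase, Finset.mem_insert]
    by_cases h : i = k <;> simp [h]
  unfold BS
  rw [hcompl, Finset.biUnion_insert, Finset.biUnion_insert]
  ext c
  simp only [Finset.mem_union, Finset.mem_product, Finset.mem_univ, true_and, and_true]
  tauto

lemma union_card_eq (hWdisj : ∀ j k, j ≠ k → Disjoint (W j) (W k))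
    (hWcard : ∀ k, (W k).card = Q / K)
    {S : Finset (Fin K)} {k : Fin K} (hk : k ∈ S) :
    ((W k ×ˢ Finset.univ) ∪ ((Finset.univ ×ˢ M k) ∪ BS M W S)).card
      = (Q / K) * (Dk M S k).card + ((Finset.univ ×ˢ M k) ∪ BS M W S).card := by
  rw [← Finset.card_sdiff_add_card]
  congr 1
  have e : (W k ×ˢ Finset.univ) \ ((Finset.univ ×ˢ M k) ∪ BS M W S)
      = W k ×ˢ Dk M S k := by
    ext ⟨q, n⟩
    simp only [Finset.mem_sdiff, Finset.mem_union, Finset.mem_product, Finset.mem_univ,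
      true_and, and_true, BS, Dk, Finset.mem_filter, not_or]
    constructor
    · rintro ⟨hq, hn1, hq2, hn2⟩
      exact ⟨hq, notmem_biUnionM M |>.mp hn2, hn1⟩
    · rintro ⟨hq, hUn, hn⟩
      refine ⟨hq, hn, ?_, (notmem_biUnionM M).mpr hUn⟩
      intro hq2
      rw [Finset.mem_biUnion] at hq2
      obtain ⟨j, hj, hqj⟩ := hq2
      rw [Finset.mem_compl] at hj
      have hjk : j ≠ k := fun h => hj (h ▸ hk)
      exact absurd hq (Finset.disjoint_left.mp (hWdisj j k hjk) hqj)
  rw [e, Finset.card_product, hWcard k]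

lemma areal_fiber (S : Finset (Fin K)) (φ : ℕ → ℝ) :
    ∑ j ∈ Finset.Icc 1 S.card,
      ((Finset.univ.filter (fun n : Fin N => Uf M n ⊆ S ∧ (Uf M n).card = j)).card : ℝ) * φ j
    = ∑ n ∈ PS M S, φ ((Uf M n).card) := by
  classical
  rw [← Finset.sum_fiberwise_of_maps_to (g := fun n => (Uf M n).card)
    (t := Finset.Icc 1 S.card) (fun n hn => by
      simp only [PS, Finset.mem_filter, Finset.mem_univ, true_and] at hn
      rw [Finset.mem_Icc]
      exact ⟨hn.2, Finset.card_le_card hn.1⟩) (fun n => φ ((Uf M n).card))]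
  apply Finset.sum_congr rfl
  intro j hj
  rw [Finset.mem_Icc] at hj
  have e : (PS M S).filter (fun n => (Uf M n).card = j)
      = Finset.univ.filter (fun n : Fin N => Uf M n ⊆ S ∧ (Uf M n).card = j) := by
    ext n
    simp only [PS, Finset.mem_filter, Finset.mem_univ, true_and]
    constructor
    · rintro ⟨⟨h1, _⟩, h3⟩; exact ⟨h1, h3⟩
    · rintro ⟨h1, h2⟩; exact ⟨⟨h1, h2 ▸ hj.1⟩, h2⟩
  rw [e]
  calc ((Finset.univ.filter (fun n : Fin N => Uf M n ⊆ S ∧ (Uf M n).card = j)).card : ℝ) * φ j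
      = ∑ _n ∈ Finset.univ.filter (fun n : Fin N => Uf M n ⊆ S ∧ (Uf M n).card = j), φ j := by
        rw [Finset.sum_const, nsmul_eq_mul]
    _ = ∑ n ∈ Finset.univ.filter (fun n : Fin N => Uf M n ⊆ S ∧ (Uf M n).card = j),
          φ ((Uf M n).card) := by
        apply Finset.sum_congr rfl
        intro n hn
        rw [Finset.mem_filter] at hn
        rw [hn.2.2]

end comb
end CDC
namespace CDC
open Finset Real
set_option linter.unusedSectionVars false

section comb2
variable {Q N K : ℕ}
variable (M : Fin K → Finset (Fin N))

lemma filter_S_eq {S : Finset (Fin K)} {n : Fin N} (hU : Uf M n ⊆ S) :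
    S.filter (fun k => n ∈ M k) = Uf M n := by
  ext k
  simp only [Finset.mem_filter, Uf, Finset.mem_univ, true_and]
  constructor
  · rintro ⟨_, h⟩; exact h
  · intro h
    exact ⟨hU (by simp only [Uf, Finset.mem_filter, Finset.mem_univ, true_and]; exact h), h⟩

lemma card_filter_not {S : Finset (Fin K)} {n : Fin N} (hU : Uf M n ⊆ S) :
    (S.filter (fun k => n ∉ M k)).card = S.card - (Uf M n).card := by
  have h := Finset.card_filter_add_card_filter_not (s := S) (p := fun k => n ∈ M k)
  rw [filter_S_eq M hU] at h
  omega

lemma gain_sum (S : Finset (Fin K)) :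
    ∑ n ∈ PS M S, (S.card - (Uf M n).card) ≤ ∑ k ∈ S, (Dk M S k).card := by
  classical
  have e1 : ∀ k, (Dk M S k).card
      = ∑ n ∈ Finset.univ, (if Uf M n ⊆ S ∧ n ∉ M k then 1 else 0) := by
    intro k
    rw [Dk, Finset.card_filter]
  calc ∑ n ∈ PS M S, (S.card - (Uf M n).card)
      = ∑ n ∈ PS M S, ∑ k ∈ S, (if Uf M n ⊆ S ∧ n ∉ M k then 1 else 0) := by
        apply Finset.sum_congr rfl
        intro n hn
        simp only [PS, Finset.mem_filter, Finset.mem_univ, true_and] at hn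
        calc S.card - (Uf M n).card = (S.filter (fun k => n ∉ M k)).card :=
              (card_filter_not M hn.1).symm
          _ = ∑ k ∈ S, (if n ∉ M k then 1 else 0) := Finset.card_filter _ _
          _ = ∑ k ∈ S, (if Uf M n ⊆ S ∧ n ∉ M k then 1 else 0) := by
              apply Finset.sum_congr rfl
              intro k _
              rw [if_congr (Iff.symm (and_iff_right hn.1)) rfl rfl]
    _ ≤ ∑ n ∈ Finset.univ, ∑ k ∈ S, (if Uf M n ⊆ S ∧ n ∉ M k then 1 else 0) :=
        Finset.sum_le_sum_of_subset (Finset.filter_subset _ _)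
    _ = ∑ k ∈ S, ∑ n ∈ Finset.univ, (if Uf M n ⊆ S ∧ n ∉ M k then 1 else 0) :=
        Finset.sum_comm
    _ = ∑ k ∈ S, (Dk M S k).card := by
        apply Finset.sum_congr rfl
        intro k _
        rw [e1 k]

/-- the quantity in the lower bound -/
noncomputable def Areal (S : Finset (Fin K)) : ℝ :=
  ∑ j ∈ Finset.Icc 1 S.card,
    ((Finset.univ.filter (fun n : Fin N => Uf M n ⊆ S ∧ (Uf M n).card = j)).card : ℝ) *
      (((S.card : ℝ) - j) / (j : ℝ))

lemma Areal_eq_fiber (S : Finset (Fin K)) :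
    Areal M S = ∑ n ∈ PS M S,
      (((S.card : ℝ) - (Uf M n).card) / ((Uf M n).card : ℝ)) := by
  unfold Areal
  exact areal_fiber M S (fun j => ((S.card : ℝ) - j) / (j : ℝ))

lemma PS_erase {S : Finset (Fin K)} {k : Fin K} :
    PS M (S.erase k) = (PS M S).filter (fun n => k ∉ Uf M n) := by
  ext n
  simp only [PS, Finset.mem_filter, Finset.mem_univ, true_and, Finset.subset_erase]
  tauto

lemma ih_sum {S : Finset (Fin K)} (hS : 1 ≤ S.card) :
    ∑ k ∈ S, Areal M (S.erase k)
      = ∑ n ∈ PS M S, ((S.card : ℝ) - (Uf M n).card) *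
          ((((S.card : ℝ) - 1) - (Uf M n).card) / ((Uf M n).card : ℝ)) := by
  classical
  have per_k : ∀ k ∈ S, Areal M (S.erase k)
      = ∑ n ∈ PS M S, (if k ∉ Uf M n then
          (((S.card : ℝ) - 1) - (Uf M n).card) / ((Uf M n).card : ℝ) else 0) := by
    intro k hk
    rw [Areal_eq_fiber, PS_erase, Finset.sum_filter]
    apply Finset.sum_congr rfl
    intro n _
    have hcast : ((S.erase k).card : ℝ) = (S.card : ℝ) - 1 := by
      rw [Finset.card_erase_of_mem hk, Nat.cast_sub hS]
      norm_num
    rw [hcast]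
  rw [Finset.sum_congr rfl per_k, Finset.sum_comm]
  apply Finset.sum_congr rfl
  intro n hn
  simp only [PS, Finset.mem_filter, Finset.mem_univ, true_and] at hn
  rw [Finset.sum_ite, Finset.sum_const, Finset.sum_const_zero, add_zero, nsmul_eq_mul]
  congr 1
  have e : S.filter (fun k => k ∉ Uf M n) = S.filter (fun k => n ∉ M k) := by
    apply Finset.filter_congr
    intro k _
    simp [Uf]
  rw [e, card_filter_not M hn.1, Nat.cast_sub (Finset.card_le_card hn.1)]

end comb2
end CDC
namespace CDC
open Finset Real
set_option linter.unusedSectionVars false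

section main
variable {Ω : Type*} [Fintype Ω] {p : Ω → ℝ}
variable {Q N K T : ℕ}
variable {α : Type*} [Fintype α]
variable {V : Fin Q → Fin N → Ω → α}
variable {M : Fin K → Finset (Fin N)} {W : Fin K → Finset (Fin Q)}
variable {β : Fin K → Type*} [∀ k, Fintype (β k)]

/-- the tuple of messages of the nodes in `S` -/
def XT (X : ∀ k, Ω → β k) (S : Finset (Fin K)) :
    Ω → ((k' : {k' // k' ∈ S}) → β k'.1) := fun ω k' => X k'.1 ω

lemma memMkA {k : Fin K} (q : Fin Q) (nn : {n // n ∈ M k}) :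
    ((q, nn.1) : Fin Q × Fin N) ∈ (Finset.univ ×ˢ M k) :=
  Finset.mem_product.mpr ⟨Finset.mem_univ _, nn.2⟩

lemma memBS {S : Finset (Fin K)} {i : Fin K} (hi : i ∉ S) (q : Fin Q)
    (nn : {n // n ∈ M i}) : ((q, nn.1) : Fin Q × Fin N) ∈ BS M W S :=
  Finset.mem_union_right _ (Finset.mem_product.mpr
    ⟨Finset.mem_univ _, Finset.mem_biUnion.mpr ⟨i, Finset.mem_compl.mpr hi, nn.2⟩⟩)

variable (hp : ∀ ω, 0 ≤ p ω) (hp1 : ∑ ω, p ω = 1)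
variable (hcard : Fintype.card α = 2 ^ T)
variable (hunif : ∀ q n (x : α),
      ∑ ω ∈ Finset.univ.filter (fun ω => V q n ω = x), p ω = 1 / 2 ^ T)
variable (hindep : ∀ x : Fin Q → Fin N → α,
      ∑ ω ∈ Finset.univ.filter (fun ω => ∀ q n, V q n ω = x q n), p ω
        = ∏ q, ∏ n, ∑ ω ∈ Finset.univ.filter (fun ω => V q n ω = x q n), p ω)
variable (hWdisj : ∀ j k, j ≠ k → Disjoint (W j) (W k))
variable (hWcard : ∀ k, (W k).card = Q / K)
variable {X : ∀ k, Ω → β k}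
variable (hmap : ∀ k, ∃ ψ : (Fin Q → {n // n ∈ M k} → α) → β k,
      ∀ ω, X k ω = ψ (fun q n => V q n.1 ω))
variable (hdec : ∀ k, ∃ χ : (∀ i, β i) → (Fin Q → {n // n ∈ M k} → α) →
        ({q // q ∈ W k} → Fin N → α),
      ∀ ω, 0 < p ω →
        (fun (q : {q // q ∈ W k}) (n : Fin N) => V q.1 n ω)
          = χ (fun i => X i ω) (fun q n => V q n.1 ω))

include hp hp1 hcard hunif hindep hWdisj hWcard hmap hdec in
set_option maxHeartbeats 2000000 in
lemma step_k (S : Finset (Fin K)) (k : Fin K) (hk : k ∈ S) :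
    ((Q/K : ℕ) : ℝ) * ((Dk M S k).card : ℝ) * ((T:ℝ) * Real.log 2)
      + condEnt p (XT X (S.erase k)) (VT V (BS M W (S.erase k)))
      + condEnt p (X k) (VT V (BS M W S))
    ≤ condEnt p (XT X S) (VT V (BS M W S)) := by
  classical
  choose ψc hψc using hmap
  obtain ⟨χ, hχ⟩ := hdec k
  -- chain rules
  have chain1 := chainCond hp hp1 (VT V (Finset.univ ×ˢ M k)) (XT X S) (VT V (BS M W S))
  have chain2 := chainCond hp hp1 (XT X S) (VT V (Finset.univ ×ˢ M k)) (VT V (BS M W S))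
  have swap12 := condEnt_swap hp hp1 (VT V (Finset.univ ×ˢ M k)) (XT X S) (VT V (BS M W S))
  -- decoding: add the tuple V_{W_k} to the messages
  have dec_add : condEnt p (XT X S)
        (fun ω => (VT V (Finset.univ ×ˢ M k) ω, VT V (BS M W S) ω))
      = condEnt p (fun ω => (VT V (W k ×ˢ Finset.univ) ω, XT X S ω))
        (fun ω => (VT V (Finset.univ ×ˢ M k) ω, VT V (BS M W S) ω)) := by
    apply condEnt_congr_left hp hp1
      (f := fun xt c =>
        ((fun (w : {c' // c' ∈ W k ×ˢ (Finset.univ : Finset (Fin N))}) =>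
          χ (fun i => if hi : i ∈ S then xt ⟨i, hi⟩
              else ψc i (fun q nn => c.2 ⟨(q, nn.1), memBS hi q nn⟩))
            (fun q nn => c.1 ⟨(q, nn.1), memMkA q nn⟩)
            ⟨w.1.1, (Finset.mem_product.mp w.2).1⟩ w.1.2), xt))
      (g := fun pr _ => pr.2)
    · intro ω hω
      refine Prod.ext ?_ rfl
      funext w
      simp only
      have harg : (fun i => if hi : i ∈ S then XT X S ω ⟨i, hi⟩
          else ψc i (fun q nn => VT V (BS M W S) ω ⟨(q, nn.1), memBS hi q nn⟩))
          = fun i => X i ω := by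
        funext i
        by_cases hi : i ∈ S
        · rw [dif_pos hi]; rfl
        · rw [dif_neg hi]
          exact (hψc i ω).symm
      rw [harg]
      exact (congrFun (congrFun (hχ ω hω)
        ⟨w.1.1, (Finset.mem_product.mp w.2).1⟩) w.1.2)
    · intro ω hω; rfl
  have chain3 := chainCond hp hp1 (VT V (W k ×ˢ Finset.univ)) (XT X S)
    (fun ω => (VT V (Finset.univ ×ˢ M k) ω, VT V (BS M W S) ω))
  -- the exact value of the gain term
  have wk_val : condEnt p (VT V (W k ×ˢ Finset.univ))
        (fun ω => (VT V (Finset.univ ×ˢ M k) ω, VT V (BS M W S) ω))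
      = ((Q/K : ℕ) : ℝ) * ((Dk M S k).card : ℝ) * ((T:ℝ) * Real.log 2) := by
    rw [cvt2 hp hp1 (VT V (W k ×ˢ Finset.univ)) (Finset.univ ×ˢ M k) (BS M W S)]
    rw [condEnt_VT hp hp1 hcard hunif hindep (W k ×ˢ Finset.univ)
      ((Finset.univ ×ˢ M k) ∪ BS M W S)]
    rw [union_card_eq M W hWdisj hWcard hk]
    push_cast
    ring
  -- drop X_k, which is determined by V_{:,M_k}
  have drop_k : condEnt p (XT X S)
        (fun ω => (VT V (W k ×ˢ Finset.univ) ω,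
          (VT V (Finset.univ ×ˢ M k) ω, VT V (BS M W S) ω)))
      = condEnt p (XT X (S.erase k))
        (fun ω => (VT V (W k ×ˢ Finset.univ) ω,
          (VT V (Finset.univ ×ˢ M k) ω, VT V (BS M W S) ω))) := by
    apply condEnt_congr_left hp hp1
      (f := fun xt _ => fun (k' : {k' // k' ∈ S.erase k}) =>
        xt ⟨k'.1, Finset.mem_of_mem_erase k'.2⟩)
      (g := fun xt' c => fun (k' : {k' // k' ∈ S}) =>
        if h : k'.1 = k then
          cast (congrArg β h).symm (ψc k (fun q nn => c.2.1 ⟨(q, nn.1), memMkA q nn⟩))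
        else xt' ⟨k'.1, Finset.mem_erase.mpr ⟨h, k'.2⟩⟩)
    · intro ω hω; rfl
    · intro ω hω
      funext k'
      rcases k' with ⟨kv, hkv⟩
      simp only
      by_cases h : kv = k
      · subst h
        rw [dif_pos rfl]
        exact (hψc kv ω).symm
      · rw [dif_neg h]
        rfl
  -- identify the conditioning triple with Y_{(S\k)^c}
  have triple_val : condEnt p (XT X (S.erase k))
        (fun ω => (VT V (W k ×ˢ Finset.univ) ω,
          (VT V (Finset.univ ×ˢ M k) ω, VT V (BS M W S) ω)))
      = condEnt p (XT X (S.erase k)) (VT V (BS M W (S.erase k))) := by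
    rw [cvt3 hp hp1 (XT X (S.erase k)) (W k ×ˢ Finset.univ) (Finset.univ ×ˢ M k)
      (BS M W S)]
    rw [BS_erase M W hWdisj hk]
  -- conditioning on all the messages is better than conditioning on X_k
  have mono_k : condEnt p (VT V (Finset.univ ×ˢ M k))
        (fun ω => (XT X S ω, VT V (BS M W S) ω))
      ≤ condEnt p (VT V (Finset.univ ×ˢ M k))
        (fun ω => (X k ω, VT V (BS M W S) ω)) := by
    apply condEnt_mono_cond hp hp1 _ _ _ (fun c => (c.1 ⟨k, hk⟩, c.2))
    intro ω hω; rfl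
  -- X_k is a function of V_{:,M_k}
  have xk_merge : condEnt p (fun ω => (X k ω, VT V (Finset.univ ×ˢ M k) ω))
        (VT V (BS M W S))
      = condEnt p (VT V (Finset.univ ×ˢ M k)) (VT V (BS M W S)) := by
    apply condEnt_congr_left hp hp1
      (f := fun pr _ => pr.2)
      (g := fun mk _ => (ψc k (fun q nn => mk ⟨(q, nn.1), memMkA q nn⟩), mk))
    · intro ω hω; rfl
    · intro ω hω
      refine Prod.ext ?_ rfl
      exact (hψc k ω).symm
  have chain4 := chainCond hp hp1 (X k) (VT V (Finset.univ ×ˢ M k)) (VT V (BS M W S))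
  -- assemble
  rw [dec_add] at chain1
  rw [drop_k, triple_val, wk_val] at chain3
  rw [xk_merge] at chain4
  linarith [chain1, chain2, swap12, chain3, mono_k, chain4]

end main
end CDC
namespace CDC
open Finset Real
set_option linter.unusedSectionVars false

section main2
variable {Ω : Type*} [Fintype Ω] {p : Ω → ℝ}
variable {Q N K T : ℕ}
variable {α : Type*} [Fintype α]
variable {V : Fin Q → Fin N → Ω → α}
variable {M : Fin K → Finset (Fin N)} {W : Fin K → Finset (Fin Q)}
variable {β : Fin K → Type*} [∀ k, Fintype (β k)]
variable (hp : ∀ ω, 0 ≤ p ω) (hp1 : ∑ ω, p ω = 1)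
variable (hcard : Fintype.card α = 2 ^ T)
variable (hunif : ∀ q n (x : α),
      ∑ ω ∈ Finset.univ.filter (fun ω => V q n ω = x), p ω = 1 / 2 ^ T)
variable (hindep : ∀ x : Fin Q → Fin N → α,
      ∑ ω ∈ Finset.univ.filter (fun ω => ∀ q n, V q n ω = x q n), p ω
        = ∏ q, ∏ n, ∑ ω ∈ Finset.univ.filter (fun ω => V q n ω = x q n), p ω)
variable (hWdisj : ∀ j k, j ≠ k → Disjoint (W j) (W k))
variable (hWcard : ∀ k, (W k).card = Q / K)
variable {X : ∀ k, Ω → β k}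
variable (hmap : ∀ k, ∃ ψ : (Fin Q → {n // n ∈ M k} → α) → β k,
      ∀ ω, X k ω = ψ (fun q n => V q n.1 ω))
variable (hdec : ∀ k, ∃ χ : (∀ i, β i) → (Fin Q → {n // n ∈ M k} → α) →
        ({q // q ∈ W k} → Fin N → α),
      ∀ ω, 0 < p ω →
        (fun (q : {q // q ∈ W k}) (n : Fin N) => V q.1 n ω)
          = χ (fun i => X i ω) (fun q n => V q n.1 ω))

include hp hp1 hcard hunif hindep hWdisj hWcard hmap hdec in
set_option maxHeartbeats 2000000 in
lemma main_bound (S : Finset (Fin K)) :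
    ((Q/K : ℕ) : ℝ) * ((T:ℝ) * Real.log 2) * Areal M S
      ≤ condEnt p (XT X S) (VT V (BS M W S)) := by
  classical
  induction S using Finset.strongInduction with
  | _ S ih =>
    by_cases hs : S.card ≤ 1
    · have hA : Areal M S = 0 := by
        unfold Areal
        apply Finset.sum_eq_zero
        intro j hj
        rw [Finset.mem_Icc] at hj
        have hj1 : j = 1 := by omega
        have hs1 : S.card = 1 := by omega
        rw [hj1, hs1]
        norm_num
      rw [hA, mul_zero]
      exact condEnt_nonneg hp hp1 _ _
    · push_neg at hs
      have perk : ∀ k ∈ S,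
          ((Q/K:ℕ):ℝ) * ((Dk M S k).card : ℝ) * ((T:ℝ) * Real.log 2)
            + condEnt p (XT X (S.erase k)) (VT V (BS M W (S.erase k)))
            + condEnt p (X k) (VT V (BS M W S))
          ≤ condEnt p (XT X S) (VT V (BS M W S)) := fun k hk =>
        step_k hp hp1 hcard hunif hindep hWdisj hWcard hmap hdec S k hk
      have hsum : ∑ k ∈ S,
          (((Q/K:ℕ):ℝ) * ((Dk M S k).card : ℝ) * ((T:ℝ) * Real.log 2)
            + condEnt p (XT X (S.erase k)) (VT V (BS M W (S.erase k)))
            + condEnt p (X k) (VT V (BS M W S)))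
          ≤ (S.card : ℝ) * condEnt p (XT X S) (VT V (BS M W S)) := by
        calc ∑ k ∈ S,
            (((Q/K:ℕ):ℝ) * ((Dk M S k).card : ℝ) * ((T:ℝ) * Real.log 2)
              + condEnt p (XT X (S.erase k)) (VT V (BS M W (S.erase k)))
              + condEnt p (X k) (VT V (BS M W S)))
            ≤ ∑ _k ∈ S, condEnt p (XT X S) (VT V (BS M W S)) :=
              Finset.sum_le_sum perk
          _ = (S.card : ℝ) * condEnt p (XT X S) (VT V (BS M W S)) := by
              rw [Finset.sum_const, nsmul_eq_mul]
      have hsplit : ∑ k ∈ S,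
          (((Q/K:ℕ):ℝ) * ((Dk M S k).card : ℝ) * ((T:ℝ) * Real.log 2)
            + condEnt p (XT X (S.erase k)) (VT V (BS M W (S.erase k)))
            + condEnt p (X k) (VT V (BS M W S)))
          = (∑ k ∈ S, ((Q/K:ℕ):ℝ) * ((Dk M S k).card : ℝ) * ((T:ℝ) * Real.log 2))
            + (∑ k ∈ S, condEnt p (XT X (S.erase k)) (VT V (BS M W (S.erase k))))
            + (∑ k ∈ S, condEnt p (X k) (VT V (BS M W S))) := by
        rw [Finset.sum_add_distrib, Finset.sum_add_distrib]
      have hsub' : condEnt p (XT X S) (VT V (BS M W S))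
          ≤ ∑ k ∈ S, condEnt p (X k) (VT V (BS M W S)) :=
        condEnt_tuple_le_sum hp hp1 S β X (VT V (BS M W S))
      have hgain : ((Q/K:ℕ):ℝ) * ((T:ℝ) * Real.log 2)
            * (∑ n ∈ PS M S, ((S.card:ℝ) - ((Uf M n).card:ℝ)))
          ≤ ∑ k ∈ S, ((Q/K:ℕ):ℝ) * ((Dk M S k).card:ℝ) * ((T:ℝ)*Real.log 2) := by
        have h1 : ∑ k ∈ S, ((Q/K:ℕ):ℝ) * ((Dk M S k).card:ℝ) * ((T:ℝ)*Real.log 2)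
            = ((Q/K:ℕ):ℝ) * ((T:ℝ)*Real.log 2) * ∑ k ∈ S, ((Dk M S k).card:ℝ) := by
          rw [Finset.mul_sum]
          apply Finset.sum_congr rfl; intro k _; ring
        rw [h1]
        apply mul_le_mul_of_nonneg_left _ (by positivity)
        have h2 := gain_sum M S
        have h3 : (∑ n ∈ PS M S, ((S.card:ℝ) - ((Uf M n).card:ℝ)))
            = ((∑ n ∈ PS M S, (S.card - (Uf M n).card) : ℕ) : ℝ) := by
          rw [Nat.cast_sum]
          apply Finset.sum_congr rfl
          intro n hn
          simp only [PS, Finset.mem_filter, Finset.mem_univ, true_and] at hn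
          rw [Nat.cast_sub (Finset.card_le_card hn.1)]
        rw [h3]
        calc ((∑ n ∈ PS M S, (S.card - (Uf M n).card) : ℕ) : ℝ)
            ≤ ((∑ k ∈ S, (Dk M S k).card : ℕ) : ℝ) := by exact_mod_cast h2
          _ = ∑ k ∈ S, ((Dk M S k).card : ℝ) := by rw [Nat.cast_sum]
      have hIH : ((Q/K:ℕ):ℝ) * ((T:ℝ)*Real.log 2)
            * (∑ n ∈ PS M S, ((S.card:ℝ) - ((Uf M n).card:ℝ))
              * ((((S.card:ℝ)-1) - ((Uf M n).card:ℝ))/((Uf M n).card:ℝ)))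
          ≤ ∑ k ∈ S, condEnt p (XT X (S.erase k)) (VT V (BS M W (S.erase k))) := by
        rw [← ih_sum M (le_of_lt hs), Finset.mul_sum]
        apply Finset.sum_le_sum
        intro k hk
        exact ih (S.erase k) (Finset.erase_ssubset hk)
      have hident : (∑ n ∈ PS M S, ((S.card:ℝ) - ((Uf M n).card:ℝ)))
            + (∑ n ∈ PS M S, ((S.card:ℝ) - ((Uf M n).card:ℝ))
              * ((((S.card:ℝ)-1) - ((Uf M n).card:ℝ))/((Uf M n).card:ℝ)))
          = ((S.card:ℝ) - 1) * Areal M S := by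
        rw [Areal_eq_fiber, ← Finset.sum_add_distrib, Finset.mul_sum]
        apply Finset.sum_congr rfl
        intro n hn
        simp only [PS, Finset.mem_filter, Finset.mem_univ, true_and] at hn
        have hj : (0:ℝ) < ((Uf M n).card : ℝ) := by
          have : 0 < (Uf M n).card := hn.2
          exact_mod_cast this
        field_simp
        ring
      have hid2 : ((Q/K:ℕ):ℝ) * ((T:ℝ)*Real.log 2)
            * (∑ n ∈ PS M S, ((S.card:ℝ) - ((Uf M n).card:ℝ)))
          + ((Q/K:ℕ):ℝ) * ((T:ℝ)*Real.log 2)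
            * (∑ n ∈ PS M S, ((S.card:ℝ) - ((Uf M n).card:ℝ))
              * ((((S.card:ℝ)-1) - ((Uf M n).card:ℝ))/((Uf M n).card:ℝ)))
          = ((S.card:ℝ) - 1)
            * (((Q/K:ℕ):ℝ) * ((T:ℝ)*Real.log 2) * Areal M S) := by
        calc ((Q/K:ℕ):ℝ) * ((T:ℝ)*Real.log 2)
              * (∑ n ∈ PS M S, ((S.card:ℝ) - ((Uf M n).card:ℝ)))
            + ((Q/K:ℕ):ℝ) * ((T:ℝ)*Real.log 2)
              * (∑ n ∈ PS M S, ((S.card:ℝ) - ((Uf M n).card:ℝ))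
                * ((((S.card:ℝ)-1) - ((Uf M n).card:ℝ))/((Uf M n).card:ℝ)))
            = ((Q/K:ℕ):ℝ) * ((T:ℝ)*Real.log 2)
              * ((∑ n ∈ PS M S, ((S.card:ℝ) - ((Uf M n).card:ℝ)))
                + (∑ n ∈ PS M S, ((S.card:ℝ) - ((Uf M n).card:ℝ))
                  * ((((S.card:ℝ)-1) - ((Uf M n).card:ℝ))/((Uf M n).card:ℝ)))) := by
              ring
          _ = ((Q/K:ℕ):ℝ) * ((T:ℝ)*Real.log 2) * (((S.card:ℝ) - 1) * Areal M S) := by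
              rw [hident]
          _ = ((S.card:ℝ) - 1)
              * (((Q/K:ℕ):ℝ) * ((T:ℝ)*Real.log 2) * Areal M S) := by ring
      have hexp : ((S.card:ℝ) - 1) * condEnt p (XT X S) (VT V (BS M W S))
          = (S.card:ℝ) * condEnt p (XT X S) (VT V (BS M W S))
            - condEnt p (XT X S) (VT V (BS M W S)) := by ring
      have key : ((S.card:ℝ) - 1)
            * (((Q/K:ℕ):ℝ) * ((T:ℝ)*Real.log 2) * Areal M S)
          ≤ ((S.card:ℝ) - 1) * condEnt p (XT X S) (VT V (BS M W S)) := by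
        linarith [hsum, hsplit, hsub', hgain, hIH, hid2, hexp]
      have hpos : (0:ℝ) < (S.card:ℝ) - 1 := by
        have : (1:ℝ) < (S.card:ℝ) := by exact_mod_cast hs
        linarith
      exact (mul_le_mul_iff_right₀ hpos).mp key

end main2
end CDC

set_option linter.unusedSectionVars false
set_option maxHeartbeats 1000000

/-- **Claim 1 of the paper.** In the distributed computing framework with
`Q` output functions, `N` input files, `K` nodes (`K ∣ Q`), i.i.d. intermediate values
`V q n` uniform on a set of size `2^T`, file assignment `M`, disjoint reduce assignment
`W` with `|W k| = Q/K`, messages `X k` computed from node `k`'s Map outputs, and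
decodability of `(V q n)_{q ∈ W k}` at node `k`: for every `S ⊆ {1,…,K}`,
`H[X_S | Y_{Sᶜ}] ≥ T (Q/K) (∑_{j=1}^{|S|} a^{j,S} (|S|-j)/j) log 2`. -/
theorem cdc_claim1_entropy_lower_bound
    {Ω : Type*} [Fintype Ω] (p : Ω → ℝ)
    (hp : ∀ ω, 0 ≤ p ω) (hp1 : ∑ ω, p ω = 1)
    (Q N K T : ℕ) (hQ : 0 < Q) (hN : 0 < N) (hK : 0 < K) (hT : 0 < T) (hKQ : K ∣ Q)
    {α : Type*} [Fintype α] (hcard : Fintype.card α = 2 ^ T)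
    (V : Fin Q → Fin N → Ω → α)
    (hunif : ∀ q n (x : α),
      ∑ ω ∈ Finset.univ.filter (fun ω => V q n ω = x), p ω = 1 / 2 ^ T)
    (hindep : ∀ x : Fin Q → Fin N → α,
      ∑ ω ∈ Finset.univ.filter (fun ω => ∀ q n, V q n ω = x q n), p ω
        = ∏ q, ∏ n, ∑ ω ∈ Finset.univ.filter (fun ω => V q n ω = x q n), p ω)
    (M : Fin K → Finset (Fin N)) (W : Fin K → Finset (Fin Q))
    (hWdisj : ∀ j k, j ≠ k → Disjoint (W j) (W k))
    (hWcard : ∀ k, (W k).card = Q / K)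
    (β : Fin K → Type*) [∀ k, Fintype (β k)]
    (X : ∀ k, Ω → β k)
    (hmap : ∀ k, ∃ ψ : (Fin Q → {n // n ∈ M k} → α) → β k,
      ∀ ω, X k ω = ψ (fun q n => V q n.1 ω))
    (hdec : ∀ k, ∃ χ : (∀ i, β i) → (Fin Q → {n // n ∈ M k} → α) →
        ({q // q ∈ W k} → Fin N → α),
      ∀ ω, 0 < p ω →
        (fun (q : {q // q ∈ W k}) (n : Fin N) => V q.1 n ω)
          = χ (fun i => X i ω) (fun q n => V q n.1 ω))
    (S : Finset (Fin K)) :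
    condEnt p
        (fun ω (k : {k // k ∈ S}) => X k.1 ω)
        (fun ω =>
          ((fun (q : {q // q ∈ Sᶜ.biUnion W}) (n : Fin N) => V q.1 n ω),
           (fun (q : Fin Q) (n : {n // n ∈ Sᶜ.biUnion M}) => V q n.1 ω)))
      ≥ (T : ℝ) * ((Q : ℝ) / (K : ℝ)) *
          (∑ j ∈ Finset.Icc 1 S.card,
            ((Finset.univ.filter (fun n : Fin N =>
                (Finset.univ.filter (fun k => n ∈ M k)) ⊆ S ∧
                (Finset.univ.filter (fun k => n ∈ M k)).card = j)).card : ℝ) *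
              (((S.card : ℝ) - j) / (j : ℝ))) * Real.log 2 := by
  classical
  have hconv : condEnt p
        (fun ω (k : {k // k ∈ S}) => X k.1 ω)
        (fun ω =>
          ((fun (q : {q // q ∈ Sᶜ.biUnion W}) (n : Fin N) => V q.1 n ω),
           (fun (q : Fin Q) (n : {n // n ∈ Sᶜ.biUnion M}) => V q n.1 ω)))
      = condEnt p (CDC.XT X S) (CDC.VT V (CDC.BS M W S)) := by
    apply CDC.condEnt_congr_right hp hp1
      (F := fun (y : ({q // q ∈ Sᶜ.biUnion W} → Fin N → α)
          × (Fin Q → {n // n ∈ Sᶜ.biUnion M} → α)) (c : {c // c ∈ CDC.BS M W S}) =>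
        if h : c.1.1 ∈ Sᶜ.biUnion W then y.1 ⟨c.1.1, h⟩ c.1.2
        else y.2 c.1.1 ⟨c.1.2, (Finset.mem_product.mp
          ((Finset.mem_union.mp c.2).resolve_left
            (fun hc => h (Finset.mem_product.mp hc).1))).2⟩)
      (G := fun z =>
        (fun q n => z ⟨(q.1, n), Finset.mem_union_left _
          (Finset.mem_product.mpr ⟨q.2, Finset.mem_univ _⟩)⟩,
         fun q n => z ⟨(q, n.1), Finset.mem_union_right _
          (Finset.mem_product.mpr ⟨Finset.mem_univ _, n.2⟩)⟩))
    · intro ω hω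
      funext c
      simp only
      split_ifs with h
      · rfl
      · rfl
    · intro ω hω; rfl
  rw [ge_iff_le, hconv]
  have hmb := CDC.main_bound hp hp1 hcard hunif hindep hWdisj hWcard hmap hdec S
  refine le_trans (le_of_eq ?_) hmb
  have hQK : ((Q/K : ℕ) : ℝ) = (Q:ℝ)/(K:ℝ) :=
    Nat.cast_div hKQ (by exact_mod_cast hK.ne')
  rw [hQK]
  unfold CDC.Areal CDC.Uf
  ring
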